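/- arXiv:1601.02771 — 5 statements merged into one kernel-verified Lean document; each statement's English description precedes it below -/
import Mathlib

section
/- Let A be a finite alphabet, a ∈ A, and σ a non-erasing morphism of A* prolongable on a (i.e. σ(a) = aW for some nonempty W and |σⁿ(a)| → ∞) such that every letter of A occurs in the infinite fixed point σ^ω(a). Then the letter a has maximal growth: there exists a real constant C such that |σⁿ(c)| < C·|σⁿ(a)| for every letter c ∈ A and every positive integer n. -/
/-- `w` is a prefix of the infinite word `a`. -/
def IsPrefOf {A : Type*} (w : List A) (a : ℕ → A) : Prop :=
  ∀ i : Fin w.length, w.get i = a i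

/-- Fractional power `V^α`: `V^⌊α⌋` followed by the prefix of `V`
of length `⌈{α}·|V|⌉`. -/
noncomputable def fracPow {A : Type*} (V : List A) (α : ℝ) : List A :=
  (List.replicate ⌊α⌋₊ V).flatten ++ V.take ⌈Int.fract α * V.length⌉₊

/-- The set of admissible exponents in the definition of the Diophantine exponent. -/
def dioSet {A : Type*} (a : ℕ → A) : Set ℝ :=
  {ρ | ∀ N : ℕ, ∃ (U V : List A) (α : ℝ), V ≠ [] ∧ 1 ≤ α ∧
    IsPrefOf (U ++ fracPow V α) a ∧ N ≤ (U ++ fracPow V α).length ∧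
    ρ ≤ ((U ++ fracPow V α).length : ℝ) / ((U.length : ℝ) + (V.length : ℝ))}

/-- Diophantine exponent of an infinite word. -/
noncomputable def dio {A : Type*} (a : ℕ → A) : EReal :=
  sSup ((fun ρ : ℝ => (ρ : EReal)) '' dioSet a)

/-- Action of a morphism (given by its values on letters) on a finite word. -/
def mapW {A : Type*} (σ : A → List A) (w : List A) : List A := w.flatMap σ

/-- `n`-th iterate of a morphism applied to a word. -/
def iterW {A : Type*} (σ : A → List A) (n : ℕ) (w : List A) : List A :=
  (mapW σ)^[n] w

/-- `σ` is prolongable on the letter `a`. -/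
def Prolongable {A : Type*} (σ : A → List A) (a : A) : Prop :=
  (∃ W : List A, W ≠ [] ∧ σ a = a :: W) ∧
  Filter.Tendsto (fun n => (iterW σ n [a]).length) Filter.atTop Filter.atTop

/-- The letter `b` has maximal growth for `σ`. -/
def MaxGrowth {A : Type*} (σ : A → List A) (b : A) : Prop :=
  ∃ C : ℝ, ∀ c : A, ∀ n : ℕ, 1 ≤ n →
    ((iterW σ n [c]).length : ℝ) < C * ((iterW σ n [b]).length : ℝ)

/-- Incidence matrix of a morphism, viewed over `ℂ`. -/
noncomputable def incMat {A : Type*} [Fintype A] [DecidableEq A]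
    (σ : A → List A) : Matrix A A ℂ :=
  fun i j => ((σ j).count i : ℂ)

/-- Spectral radius of the incidence matrix of a morphism. -/
noncomputable def specRad {A : Type*} [Fintype A] [DecidableEq A]
    (σ : A → List A) : ℝ :=
  sSup ((fun μ : ℂ => ‖μ‖) '' spectrum ℂ (incMat σ))



lemma mapW_append {A : Type*} (σ : A → List A) (x y : List A) :
    mapW σ (x ++ y) = mapW σ x ++ mapW σ y := List.flatMap_append

lemma iterW_append {A : Type*} (σ : A → List A) (n : ℕ) (x y : List A) :
    iterW σ n (x ++ y) = iterW σ n x ++ iterW σ n y := by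
  induction n generalizing x y with
  | zero => rfl
  | succ n ih =>
    simp only [iterW, Function.iterate_succ_apply] at *
    rw [mapW_append, ih]

lemma iterW_ne_nil {A : Type*} (σ : A → List A) (hne : ∀ c, σ c ≠ [])
    (n : ℕ) {w : List A} (hw : w ≠ []) : iterW σ n w ≠ [] := by
  induction n generalizing w with
  | zero => exact hw
  | succ n ih =>
    rw [iterW, Function.iterate_succ_apply]
    apply ih
    obtain ⟨c, w', rfl⟩ := List.exists_cons_of_ne_nil hw
    simp only [mapW, List.flatMap_cons]
    exact fun h => hne c (List.append_eq_nil_iff.mp h).1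

lemma mapW_len {A : Type*} [Fintype A] (σ : A → List A) (w : List A) :
    (mapW σ w).length ≤ (Finset.univ.sup fun c => (σ c).length) * w.length := by
  induction w with
  | nil => simp [mapW]
  | cons c w ih =>
    simp only [mapW, List.flatMap_cons, List.length_append, List.length_cons] at *
    have : (σ c).length ≤ Finset.univ.sup fun c => (σ c).length :=
      Finset.le_sup (f := fun c => (σ c).length) (Finset.mem_univ c)
    nlinarith

lemma iterW_len {A : Type*} [Fintype A] (σ : A → List A) (m : ℕ) (w : List A) :
    (iterW σ m w).length ≤ (Finset.univ.sup fun c => (σ c).length) ^ m * w.length := by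
  induction m with
  | zero => simp [iterW]
  | succ m ih =>
    rw [iterW, Function.iterate_succ_apply']
    calc (mapW σ ((mapW σ)^[m] w)).length
        ≤ (Finset.univ.sup fun c => (σ c).length) * ((mapW σ)^[m] w).length := mapW_len σ _
      _ ≤ _ := by
          rw [pow_succ, mul_comm _ ((Finset.univ.sup fun c => (σ c).length)), mul_assoc]
          exact Nat.mul_le_mul_left _ ih

/-- the starting letter of a non-erasing prolongable morphism whose
fixed point contains all letters has maximal growth. -/
theorem stmt_1 {A : Type*} [Fintype A] (σ : A → List A) (a : A)
    (hne : ∀ c : A, σ c ≠ []) (hpro : Prolongable σ a)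
    (u : ℕ → A) (hu : ∀ n : ℕ, IsPrefOf (iterW σ n [a]) u)
    (hall : ∀ c : A, ∃ i : ℕ, u i = c) :
    MaxGrowth σ a := by
  classical
  set L : ℕ := Finset.univ.sup fun c => (σ c).length with hLdef
  have hmem : ∀ c : A, ∃ m : ℕ, c ∈ iterW σ m [a] := by
    intro c
    obtain ⟨i, hi⟩ := hall c
    obtain ⟨m, hm⟩ := (hpro.2.eventually_ge_atTop (i + 1)).exists
    refine ⟨m, ?_⟩
    have hget := hu m ⟨i, by omega⟩
    rw [hi] at hget
    exact hget ▸ List.get_mem _ _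
  choose m hm using hmem
  set M : ℕ := Finset.univ.sup m with hMdef
  refine ⟨(L : ℝ) ^ M + 1, fun c n _ => ?_⟩
  have hL1 : 1 ≤ L := by
    have h1 : 1 ≤ (σ a).length := List.length_pos_iff.mpr (hne a)
    exact le_trans h1 (Finset.le_sup (f := fun c => (σ c).length) (Finset.mem_univ a))
  -- c occurs in σ^{m c}(a)
  obtain ⟨x, y, hxy⟩ := List.append_of_mem (hm c)
  -- |σ^n(c)| ≤ |σ^{n + m c}(a)|
  have h1 : (iterW σ n [c]).length ≤ (iterW σ (n + m c) [a]).length := by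
    have heq : iterW σ (n + m c) [a]
        = iterW σ n x ++ iterW σ n [c] ++ iterW σ n y := by
      have : iterW σ (n + m c) [a] = iterW σ n (iterW σ (m c) [a]) := by
        simp [iterW, Function.iterate_add_apply]
      rw [this, hxy, show x ++ c :: y = x ++ [c] ++ y by simp,
        iterW_append, iterW_append]
    rw [heq]
    simp only [List.length_append]
    omega
  -- |σ^{n + m c}(a)| ≤ L^{m c} * |σ^n(a)|
  have h2 : (iterW σ (n + m c) [a]).length ≤ L ^ m c * (iterW σ n [a]).length := by
    have : iterW σ (n + m c) [a] = iterW σ (m c) (iterW σ n [a]) := by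
      rw [add_comm]
      simp [iterW, Function.iterate_add_apply]
    rw [this]
    exact iterW_len σ (m c) _
  have h3 : L ^ m c ≤ L ^ M :=
    Nat.pow_le_pow_right hL1 (Finset.le_sup (f := m) (Finset.mem_univ c))
  have h4 : 1 ≤ (iterW σ n [a]).length :=
    List.length_pos_iff.mpr (iterW_ne_nil σ hne n (by simp))
  have key : (iterW σ n [c]).length < (L ^ M + 1) * (iterW σ n [a]).length := by
    have := Nat.mul_le_mul_right ((iterW σ n [a]).length) h3
    nlinarith
  calc ((iterW σ n [c]).length : ℝ)
      < ((L ^ M + 1 : ℕ) : ℝ) * ((iterW σ n [a]).length : ℝ) := by exact_mod_cast key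
    _ = ((L : ℝ) ^ M + 1) * ((iterW σ n [a]).length : ℝ) := by push_cast; ring
end

section
/- Let V be a nonempty primitive finite word and W a finite word having both periods |V| and |σ(V)| (i.e. W is a prefix of Ṽ^∞ for some conjugate Ṽ of V, and a prefix of σ(V)^∞), with |W| ≥ |σ(V)| + |V|, where σ is a morphism. Then σ(V) is an integer power of the conjugate Ṽ of V. -/
private lemma getD_flat_rep {A : Type*} (Z : List A) (d : A) :
    ∀ (N i : ℕ), i < ((List.replicate N Z).flatten).length →
      ((List.replicate N Z).flatten).getD i d = Z.getD (i % Z.length) d := by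
  intro N
  induction N with
  | zero => intro i h; simp at h
  | succ N ih =>
    intro i h
    rw [List.replicate_succ, List.flatten_cons] at h ⊢
    by_cases hi : i < Z.length
    · rw [List.getD_eq_getElem _ _ (by simpa using h), List.getElem_append_left hi,
        Nat.mod_eq_of_lt hi, List.getD_eq_getElem _ _ hi]
    · push_neg at hi
      rw [List.getD_eq_getElem _ _ (by simpa using h), List.getElem_append_right hi,
        ← List.getD_eq_getElem _ d (by simp at h ⊢; omega), ih _ (by simp at h ⊢; omega),
        ← Nat.mod_eq_sub_mod hi]

private lemma getD_of_prefix {A : Type*} {W L : List A} (d : A) (h : W <+: L)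
    {i : ℕ} (hi : i < W.length) : W.getD i d = L.getD i d := by
  rw [List.getD_eq_getElem _ _ hi, List.getD_eq_getElem _ _ (hi.trans_le h.length_le),
    h.getElem hi]


/-- if `V` is primitive, `Ṽ` a conjugate of `V`, and `W` is both a
prefix of `Ṽ^∞` and of `σ(V)^∞` with `|W| ≥ |σ(V)| + |V|`, then `σ(V)` is an
integer power of `Ṽ`. -/
theorem stmt_9 {A : Type*} (σ : A → List A) (V Vt W : List A)
    (hVne : V ≠ [])
    (hVprim : ∀ (U : List A) (m : ℕ), U.length < V.length →
      V ≠ (List.replicate m U).flatten)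
    (hconj : ∃ X Y : List A, V = X ++ Y ∧ Vt = Y ++ X)
    (hper1 : W <+: (List.replicate W.length Vt).flatten)
    (hper2 : W <+: (List.replicate W.length (mapW σ V)).flatten)
    (hlen : (mapW σ V).length + V.length ≤ W.length) :
    ∃ m : ℕ, mapW σ V = (List.replicate m Vt).flatten := by
  obtain ⟨d, -⟩ := List.exists_mem_of_ne_nil V hVne
  obtain ⟨X0, Y0, hV, hVt⟩ := hconj
  set Y : List A := mapW σ V with hY
  set p : ℕ := Vt.length with hp
  set q : ℕ := Y.length with hq
  have hpV : p = V.length := by rw [hp, hV, hVt]; simp; omega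
  have hp0 : 0 < p := by rw [hpV]; exact List.length_pos_iff.mpr hVne
  by_cases hq0 : q = 0
  · exact ⟨0, by simpa using (List.length_eq_zero_iff.mp hq0)⟩
  replace hq0 : 0 < q := Nat.pos_of_ne_zero hq0
  set n : ℕ := W.length with hn
  have hnpq : p + q ≤ n := by omega
  set f : ℕ → A := fun i => W.getD i d with hf
  -- periodicity facts
  have P1 : ∀ i, i < n → f i = Vt.getD (i % p) d := by
    intro i hi
    rw [hf]
    simp only
    rw [getD_of_prefix d hper1 hi, getD_flat_rep Vt d _ i
      (lt_of_lt_of_le hi hper1.length_le)]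
  have P2 : ∀ i, i < n → f i = Y.getD (i % q) d := by
    intro i hi
    rw [hf]
    simp only
    rw [getD_of_prefix d hper2 hi, getD_flat_rep Y d _ i
      (lt_of_lt_of_le hi hper2.length_le)]
  have hper_p : ∀ x, x + p < n → f (x + p) = f x := by
    intro x hx
    rw [P1 _ hx, P1 _ (by omega), Nat.add_mod_right]
  have hper_q : ∀ x, x + q < n → f (x + q) = f x := by
    intro x hx
    rw [P2 _ hx, P2 _ (by omega), Nat.add_mod_right]
  set g : ℕ := Nat.gcd p q with hg
  set m : ℕ := p + q with hm
  have hm0 : 0 < m := by omega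
  have hg0 : 0 < g := Nat.gcd_pos_of_pos_left _ hp0
  have hgp : g ∣ p := Nat.gcd_dvd_left p q
  have hgq : g ∣ q := Nat.gcd_dvd_right p q
  -- the step map
  have step : ∀ z, f ((z + p) % m) = f (z % m) := by
    intro z
    have hr : z % m < m := Nat.mod_lt _ hm0
    have h1 : (z + p) % m = (z % m + p) % m := by
      conv_lhs => rw [Nat.add_mod, Nat.mod_eq_of_lt (show p < m by omega)]
    rw [h1]
    by_cases hc : z % m + p < m
    · rw [Nat.mod_eq_of_lt hc]
      exact hper_p _ (by omega)
    · push_neg at hc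
      have h2 : (z % m + p) % m = z % m - q := by
        rw [Nat.mod_eq_sub_mod hc, Nat.mod_eq_of_lt (by omega)]
        omega
      rw [h2]
      have := hper_q (z % m - q) (by omega)
      rw [show z % m - q + q = z % m by omega] at this
      exact this.symm
  have iter : ∀ k z, f ((z + k * p) % m) = f (z % m) := by
    intro k
    induction k with
    | zero => intro z; simp
    | succ k ih =>
      intro z
      have : z + (k + 1) * p = (z + p) + k * p := by ring
      rw [this, ih (z + p), step z]
  -- Bezout: some multiple of p is ≡ g mod m
  obtain ⟨k, hk⟩ : ∃ k : ℕ, (k * p) % m = g % m := by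
    have hgcd : Int.gcd (p : ℤ) (m : ℤ) = g := by
      rw [Int.gcd_natCast_natCast, hm, Nat.add_comm p q, Nat.gcd_add_self_right]
    have hBez := Int.gcd_eq_gcd_ab (p : ℤ) (m : ℤ)
    rw [hgcd] at hBez
    set a : ℤ := Int.gcdA (p : ℤ) (m : ℤ)
    set b : ℤ := Int.gcdB (p : ℤ) (m : ℤ)
    refine ⟨(a % m).toNat, ?_⟩
    have hm0' : (0 : ℤ) < (m : ℤ) := by exact_mod_cast hm0
    have hka : ((a % m).toNat : ℤ) = a % m := Int.toNat_of_nonneg (Int.emod_nonneg a (by omega))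
    have key : (((a % m).toNat * p : ℕ) : ℤ) % m = ((g : ℕ) : ℤ) % m := by
      push_cast
      rw [hka, Int.mul_emod, Int.emod_emod_of_dvd _ dvd_rfl, ← Int.mul_emod]
      rw [hBez, Int.add_mul_emod_self_left, mul_comm]
    exact_mod_cast key
  have stepg : ∀ z, f ((z + g) % m) = f (z % m) := by
    intro z
    have h1 : (z + g) % m = (z + k * p) % m := by
      conv_lhs => rw [Nat.add_mod, ← hk, ← Nat.add_mod]
    rw [h1, iter]
  -- f is g-periodic below m
  have Kg : ∀ x, x + g < m → f (x + g) = f x := by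
    intro x hx
    have := stepg x
    rwa [Nat.mod_eq_of_lt hx, Nat.mod_eq_of_lt (by omega)] at this
  have fmodg : ∀ x, x < m → f x = f (x % g) := by
    intro x
    induction x using Nat.strong_induction_on with
    | _ x ih =>
      intro hx
      by_cases hxg : x < g
      · rw [Nat.mod_eq_of_lt hxg]
      · push_neg at hxg
        have h1 : f x = f (x - g) := by
          have := Kg (x - g) (by omega)
          rw [show x - g + g = x by omega] at this
          exact this
        rw [h1, ih (x - g) (by omega) (by omega), ← Nat.mod_eq_sub_mod hxg]
  have fG : ∀ x y, x < m → y < m → x % g = y % g → f x = f y := by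
    intro x y hx hy hxy
    rw [fmodg x hx, fmodg y hy, hxy]
  -- Vt values below p are f values
  have hVtf : ∀ i, i < p → Vt.getD i d = f i := by
    intro i hi
    rw [P1 i (by omega), Nat.mod_eq_of_lt hi]
  -- V's entries in terms of f
  have hVf : ∀ i, i < p → V.getD i d = f ((Y0.length + i) % p) := by
    intro i hi
    have hlen0 : Y0.length + X0.length = p := by rw [hp, hVt]; simp
    rw [← hVtf _ (Nat.mod_lt _ hp0)]
    by_cases hc : i < X0.length
    · have h1 : (Y0.length + i) % p = Y0.length + i := Nat.mod_eq_of_lt (by omega)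
      rw [h1, hV, hVt, List.getD_append _ _ _ _ (by omega : i < X0.length) ,
        List.getD_eq_getElem _ _ (by simp; omega : Y0.length + i < (Y0 ++ X0).length),
        List.getElem_append_right (by omega), ← List.getD_eq_getElem _ d (by omega)]
      congr 1
      omega
    · push_neg at hc
      have hiy : i - X0.length < Y0.length := by rw [hpV, hV] at hi; simp at hi; omega
      have h1 : (Y0.length + i) % p = i - X0.length := by
        have : Y0.length + i - p = i - X0.length := by omega
        rw [Nat.mod_eq_sub_mod (by omega), this, Nat.mod_eq_of_lt (by omega)]
      rw [h1, hV, hVt,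
        List.getD_eq_getElem _ _ (by simp only [List.length_append]; omega),
        List.getElem_append_right hc,
        ← List.getD_eq_getElem _ d (by simpa using hiy),
        List.getD_append _ _ _ _ hiy]
  -- g = p, by primitivity
  have hgp' : g = p := by
    by_contra hne
    have hglt : g < p := lt_of_le_of_ne (Nat.le_of_dvd hp0 hgp) hne
    refine hVprim (V.take g) (p / g) (by rw [List.length_take]; omega) ?_
    apply List.ext_getElem
    · have h3 : (List.replicate (p / g) (V.take g)).flatten.length
          = (p / g) * (V.take g).length := by simp
      rw [h3, List.length_take, min_eq_left (by omega), Nat.div_mul_cancel hgp]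
      omega
    · intro i h1 h2
      rw [← List.getD_eq_getElem _ d h1, ← List.getD_eq_getElem _ d h2,
        getD_flat_rep _ d _ _ h2]
      have hilt : i < p := by omega
      have himod : i % (V.take g).length = i % g := by
        rw [List.length_take, min_eq_left (by omega)]
      have htk : i % g < (V.take g).length := by
        rw [List.length_take, min_eq_left (by omega)]; exact Nat.mod_lt _ hg0
      rw [himod, List.getD_eq_getElem _ _ htk, List.getElem_take,
        ← List.getD_eq_getElem _ d ((Nat.mod_lt i hg0).trans (by omega)), hVf _ hilt,
        hVf _ ((Nat.mod_lt i hg0).trans hglt)]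
      apply fG _ _ (lt_of_lt_of_le (Nat.mod_lt _ hp0) (by omega))
        (lt_of_lt_of_le (Nat.mod_lt _ hp0) (by omega))
      rw [Nat.mod_mod_of_dvd _ hgp, Nat.mod_mod_of_dvd _ hgp, Nat.add_mod Y0.length i g,
        Nat.add_mod Y0.length (i % g) g, Nat.mod_mod_of_dvd i (dvd_refl g)]
  -- p divides q
  have hpq : p ∣ q := hgp' ▸ hgq
  refine ⟨q / p, ?_⟩
  apply List.ext_getElem
  · simp [Nat.div_mul_cancel hpq, ← hq, ← hp]
  · intro i h1 h2
    rw [← List.getD_eq_getElem _ d h1, ← List.getD_eq_getElem _ d h2,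
      getD_flat_rep _ d _ _ h2]
    have hiq : i < q := h1
    have := P2 i (by omega)
    rw [Nat.mod_eq_of_lt hiq] at this
    rw [← hp, ← this, P1 i (by omega)]
end

section
/- (Fine and Wilf) If a finite word W has periods p and q and |W| ≥ p + q − gcd(p, q), then W has period gcd(p, q). -/
/-- `W` has period `p`: `W_i = W_{i+p}` whenever both indices are valid. -/
def HasPeriod {A : Type*} (W : List A) (p : ℕ) : Prop :=
  1 ≤ p ∧ ∀ i : ℕ, ∀ h : i + p < W.length,
    W.get ⟨i, Nat.lt_of_le_of_lt (Nat.le_add_right i p) h⟩ = W.get ⟨i + p, h⟩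

private lemma fw_chain {B : Type*} (f : ℕ → B) (m d : ℕ)
    (h : ∀ i, i + d < m → f i = f (i + d)) :
    ∀ k j, j + k * d < m → f j = f (j + k * d) := by
  intro k
  induction k with
  | zero => simp
  | succ k ih =>
    intro j hj
    have hk : (k + 1) * d = k * d + d := by ring
    have h1 : f j = f (j + k * d) := ih j (by omega)
    have h2 : f (j + k * d) = f (j + k * d + d) := h (j + k * d) (by omega)
    rw [h1, h2]; congr 1; omega

private lemma fw_aux {B : Type*} :
    ∀ N p q, p + q ≤ N → 1 ≤ p → p ≤ q →
    ∀ (n : ℕ) (f : ℕ → B),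
      (∀ i, i + p < n → f i = f (i + p)) →
      (∀ i, i + q < n → f i = f (i + q)) →
      p + q - Nat.gcd p q ≤ n →
      ∀ i, i + Nat.gcd p q < n → f i = f (i + Nat.gcd p q) := by
  intro N
  induction N with
  | zero => intro p q hN hp hpq; omega
  | succ N ih =>
    intro p q hN hp hpq n f Hp Hq hlen i hi
    rcases Nat.eq_or_lt_of_le hpq with heq | hlt
    · subst heq
      rw [Nat.gcd_self] at hi ⊢
      exact Hp i hi
    · obtain ⟨r, hr, hq⟩ : ∃ r, 1 ≤ r ∧ q = p + r := ⟨q - p, by omega, by omega⟩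
      set d := Nat.gcd p q with hdd
      have hd : d = Nat.gcd p r := by
        rw [hdd, hq, Nat.gcd_self_add_right]
      have hd1 : 1 ≤ d := Nat.gcd_pos_of_pos_left q hp
      have hdp : d ∣ p := Nat.gcd_dvd_left p q
      have hdq : d ∣ q := Nat.gcd_dvd_right p q
      have hdlep : d ≤ p := Nat.le_of_dvd (by omega) hdp
      -- the prefix of length n - p has period r
      have Hpr : ∀ j, j + r < n - p → f j = f (j + r) := by
        intro j hj
        have h2 : f j = f (j + q) := Hq j (by omega)
        have h3 : f (j + r) = f (j + r + p) := Hp (j + r) (by omega)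
        rw [h2, h3]; congr 1; omega
      have Hpp : ∀ j, j + p < n - p → f j = f (j + p) := fun j hj => Hp j (by omega)
      -- induction hypothesis: prefix has period d
      have Hpref : ∀ j, j + d < n - p → f j = f (j + d) := by
        have hrd : Nat.gcd p r = Nat.gcd r p := Nat.gcd_comm p r
        have hlen' : p + r - Nat.gcd p r ≤ n - p := by
          have : Nat.gcd p r = d := hd.symm
          omega
        rcases le_total p r with h | h
        · have := ih p r (by omega) hp h (n - p) f Hpp Hpr hlen'
          rw [← hd] at this; exact this
        · have := ih r p (by omega) hr h (n - p) f Hpr Hpp (by omega)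
          rw [← hrd, ← hd] at this; exact this
      have Hchain := fw_chain f (n - p) d Hpref
      by_cases hc : i + d < n - p
      · exact Hpref i hc
      · by_cases hip : p ≤ i
        · have e1 : f (i - p) = f (i - p + p) := Hp (i - p) (by omega)
          have e2 : f (i + d - p) = f (i + d - p + p) := Hp (i + d - p) (by omega)
          have e3 : f (i - p) = f (i - p + d) := Hpref (i - p) (by omega)
          have w1 : i - p + p = i := by omega
          have w2 : i + d - p + p = i + d := by omega
          have w3 : i - p + d = i + d - p := by omega
          rw [w1] at e1; rw [w2] at e2; rw [w3] at e3
          rw [← e1, e3, e2]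
        · -- i < p; here necessarily r = d
          have hdleq : d ≤ q := Nat.le_of_dvd (by omega) hdq
          have hdr : d ∣ r := by
            have h7 : d ∣ q - p := Nat.dvd_sub hdq hdp
            have hqp : q - p = r := by omega
            rwa [hqp] at h7
          have h2d : r < 2 * d := by omega
          obtain ⟨k, hk⟩ := hdr
          have hklt : k < 2 := by
            by_contra h
            push_neg at h
            have : d * 2 ≤ d * k := Nat.mul_le_mul_left d h
            omega
          have hk1 : 1 ≤ k := by
            rcases Nat.eq_zero_or_pos k with h0 | h0
            · subst h0; simp at hk; omega
            · exact h0
          have hke : k = 1 := by omega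
          subst hke
          simp at hk
          have hrd : r = d := hk
          have hnp : 2 * p ≤ n := by omega
          have hipd : p ≤ i + d := by omega
          have e1 : f (i + d - p) = f (i + d - p + p) := Hp (i + d - p) (by omega)
          have w1 : i + d - p + p = i + d := by omega
          rw [w1] at e1
          obtain ⟨m, hm⟩ := hdp
          have hm1 : 1 ≤ m := by
            rcases Nat.eq_zero_or_pos m with h0 | h0
            · subst h0; simp at hm; omega
            · exact h0
          have hmd : (m - 1) * d = p - d := by
            have h8 : d * m = d * (m - 1) + d * 1 := by
              rw [← Nat.mul_add]
              congr 1
              omega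
            have h9 : d * (m - 1) = (m - 1) * d := Nat.mul_comm _ _
            omega
          have e2 : f (i + d - p) = f (i + d - p + (m - 1) * d) := by
            apply Hchain
            omega
          have w2 : i + d - p + (m - 1) * d = i := by omega
          rw [w2] at e2
          rw [← e2, e1]

private lemma fw_main {B : Type*} (p q n : ℕ) (f : ℕ → B) (hp : 1 ≤ p) (hq : 1 ≤ q)
    (Hp : ∀ i, i + p < n → f i = f (i + p))
    (Hq : ∀ i, i + q < n → f i = f (i + q))
    (hlen : p + q - Nat.gcd p q ≤ n) :
    ∀ i, i + Nat.gcd p q < n → f i = f (i + Nat.gcd p q) := by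
  rcases le_total p q with h | h
  · exact fw_aux (p + q) p q le_rfl hp h n f Hp Hq hlen
  · have hg : Nat.gcd q p = Nat.gcd p q := Nat.gcd_comm q p
    intro i hi
    have := fw_aux (q + p) q p le_rfl hq h n f Hq Hp (by omega) i (by omega)
    rwa [hg] at this

/-- Fine and Wilf: a word of length at least `p + q - gcd(p,q)`
with periods `p` and `q` has period `gcd(p,q)`. -/
theorem stmt_10 {A : Type*} (W : List A) (p q : ℕ)
    (hp : HasPeriod W p) (hq : HasPeriod W q)
    (hlen : p + q - Nat.gcd p q ≤ W.length) :
    HasPeriod W (Nat.gcd p q) := by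
  refine ⟨Nat.gcd_pos_of_pos_left q hp.1, ?_⟩
  intro i h
  set f : ℕ → Option A := fun i => W[i]? with hf
  have trans : ∀ r, (1 ≤ r ∧ ∀ i : ℕ, ∀ h : i + r < W.length,
      W.get ⟨i, Nat.lt_of_le_of_lt (Nat.le_add_right i r) h⟩ = W.get ⟨i + r, h⟩) →
      ∀ j, j + r < W.length → f j = f (j + r) := by
    intro r hr j hj
    have h1 : j < W.length := by omega
    simp only [hf, List.getElem?_eq_getElem hj, List.getElem?_eq_getElem h1]
    exact congrArg some (by simpa [List.get_eq_getElem] using hr.2 j hj)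
  have key := fw_main p q W.length f hp.1 hq.1 (trans p hp) (trans q hq) hlen i h
  have h1 : i < W.length := by omega
  simp only [hf, List.getElem?_eq_getElem h, List.getElem?_eq_getElem h1] at key
  simpa [List.get_eq_getElem] using key
end

section
/- Let σ be a morphism on a finite alphabet A prolongable on a, with infinite fixed point u = σ^ω(a), all letters of A occurring in u, and let W(N) = |σ(u₁u₂⋯u_N)| where u₁⋯u_N is the prefix of u of length N. If lim inf_{N→∞} W(N)/N > 1, then the spectral radius of the incidence matrix M_σ is strictly greater than 1. -/
section Stmt12Aux
open Matrix Filter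
attribute [local instance] Matrix.linftyOpNormedRing Matrix.linftyOpNormedAlgebra

variable {A : Type*} [Fintype A] [DecidableEq A]

lemma aux_sum_count (l : List A) : ∑ i : A, l.count i = l.length := by
  induction l with
  | nil => simp
  | cons x l ih => simp [List.count_cons, Finset.sum_add_distrib, ih, beq_iff_eq]

lemma aux_cnt_mapW (σ : A → List A) (w : List A) :
    (fun i => (((mapW σ w).count i : ℂ))) = incMat σ *ᵥ (fun i => ((w.count i : ℂ))) := by
  induction w with
  | nil => funext i; simp [mapW, Matrix.mulVec, dotProduct]
  | cons x w ih =>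
    funext i
    have h1 : mapW σ (x :: w) = σ x ++ mapW σ w := by simp [mapW]
    have h2 := congrFun ih i
    simp only [Matrix.mulVec, dotProduct] at h2 ⊢
    rw [h1, List.count_append]
    push_cast
    rw [h2]
    simp [List.count_cons, mul_add, Finset.sum_add_distrib, mul_ite, beq_iff_eq,
      Finset.sum_ite_eq', incMat, add_comm]

lemma aux_cnt_iter (σ : A → List A) (a : A) (n : ℕ) :
    (fun i => (((iterW σ n [a]).count i : ℂ))) = (incMat σ) ^ n *ᵥ (fun i => (([a].count i : ℂ))) := by
  induction n with
  | zero => simp [iterW]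
  | succ n ih =>
    have h : iterW σ (n+1) [a] = mapW σ (iterW σ n [a]) := by
      simp [iterW, Function.iterate_succ_apply']
    rw [h, aux_cnt_mapW, ih, Matrix.mulVec_mulVec, ← pow_succ']

lemma aux_len_le (σ : A → List A) (a : A) (n : ℕ) :
    ((iterW σ n [a]).length : ℝ) ≤ (Fintype.card A : ℝ) * ‖(incMat σ) ^ n‖ := by
  have hv0 : ‖(fun i => (([a].count i : ℂ)))‖ ≤ 1 := by
    rw [pi_norm_le_iff_of_nonneg zero_le_one]
    intro i
    rw [Complex.norm_natCast]
    exact_mod_cast (List.count_le_length : [a].count i ≤ [a].length)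
  have key : ‖(fun i => (((iterW σ n [a]).count i : ℂ)))‖ ≤ ‖(incMat σ) ^ n‖ := by
    rw [aux_cnt_iter]
    calc ‖(incMat σ) ^ n *ᵥ (fun i => (([a].count i : ℂ)))‖
        ≤ ‖(incMat σ) ^ n‖ * ‖(fun i => (([a].count i : ℂ)))‖ :=
          Matrix.linfty_opNorm_mulVec _ _
      _ ≤ ‖(incMat σ) ^ n‖ * 1 := by gcongr
      _ = ‖(incMat σ) ^ n‖ := mul_one _
  calc ((iterW σ n [a]).length : ℝ)
      = ∑ i : A, (((iterW σ n [a]).count i : ℝ)) := by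
        rw [← aux_sum_count (iterW σ n [a])]; push_cast; ring
    _ = ∑ i : A, ‖(((iterW σ n [a]).count i : ℂ))‖ := by
        simp [Complex.norm_natCast]
    _ ≤ ∑ _i : A, ‖(fun i => (((iterW σ n [a]).count i : ℂ)))‖ :=
        Finset.sum_le_sum fun i _ => norm_le_pi_norm (fun j : A => (((iterW σ n [a]).count j : ℂ))) i
    _ = (Fintype.card A : ℝ) * ‖(fun i => (((iterW σ n [a]).count i : ℂ)))‖ := by
        rw [Finset.sum_const, Finset.card_univ, nsmul_eq_mul]
    _ ≤ (Fintype.card A : ℝ) * ‖(incMat σ) ^ n‖ := by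
        gcongr

lemma aux_ofFn_pref {B : Type*} (u : ℕ → B) (w : List B) (h : IsPrefOf w u) :
    (List.ofFn fun i : Fin w.length => u i) = w := by
  apply List.ext_get (by simp)
  intro i h1 h2
  simp only [List.get_ofFn]
  exact ((h ⟨i, h2⟩).symm).trans (by simp)

lemma aux_W_at_L {B : Type*} (σ : B → List B) (a : B) (u : ℕ → B)
    (hu : ∀ n : ℕ, IsPrefOf (iterW σ n [a]) u) (n : ℕ) :
    mapW σ (List.ofFn fun i : Fin (iterW σ n [a]).length => u i) = iterW σ (n+1) [a] := by
  rw [aux_ofFn_pref u _ (hu n)]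
  simp [iterW, Function.iterate_succ_apply']

end Stmt12Aux

section Stmt12Main
open Matrix Filter
attribute [local instance] Matrix.linftyOpNormedRing Matrix.linftyOpNormedAlgebra

/-- if the dilation factor `liminf |σ(u₁⋯u_N)|/N` exceeds 1, then
the spectral radius of the incidence matrix of `σ` exceeds 1. -/
theorem stmt_12 {A : Type*} [Fintype A] [DecidableEq A] (σ : A → List A) (a : A)
    (hpro : Prolongable σ a)
    (u : ℕ → A) (hu : ∀ n : ℕ, IsPrefOf (iterW σ n [a]) u)
    (hall : ∀ c : A, ∃ i : ℕ, u i = c)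
    (hdil : 1 < Filter.atTop.liminf fun N : ℕ =>
      ((mapW σ (List.ofFn fun i : Fin N => u i)).length : ℝ) / (N : ℝ)) :
    1 < specRad σ := by
  by_contra hcon
  push_neg at hcon
  haveI : CompleteSpace (Matrix A A ℂ) := FiniteDimensional.complete ℂ _
  have hrad : spectralRadius ℂ (incMat σ) ≤ 1 := by
    have hbdd : BddAbove ((fun μ : ℂ => ‖μ‖) '' spectrum ℂ (incMat σ)) :=
      ((spectrum.isCompact (incMat σ)).image continuous_norm).bddAbove
    refine iSup₂_le fun k hk => ?_
    have h1 : ‖k‖ ≤ 1 := (le_csSup hbdd ⟨k, hk, rfl⟩).trans hcon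
    simpa [← ENNReal.coe_one, ENNReal.coe_le_coe, ← NNReal.coe_le_coe] using h1
  set T := Filter.atTop.liminf fun N : ℕ =>
      ((mapW σ (List.ofFn fun i : Fin N => u i)).length : ℝ) / (N : ℝ) with hT
  set ρ : ℝ := (1 + T) / 2 with hρ
  have hρ1 : 1 < ρ := by rw [hρ]; linarith
  have hρT : ρ < T := by rw [hρ]; linarith
  set ρ' : ℝ := (1 + ρ) / 2 with hρ'
  have hρ'1 : 1 < ρ' := by rw [hρ']; linarith
  have hρ'ρ : ρ' < ρ := by rw [hρ']; linarith
  have hρ'0 : (0:ℝ) < ρ' := by linarith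
  have hWev : ∀ᶠ N : ℕ in atTop, ρ <
      ((mapW σ (List.ofFn fun i : Fin N => u i)).length : ℝ) / (N : ℝ) := by
    refine Filter.eventually_lt_of_lt_liminf hρT ?_
    exact Filter.isBoundedUnder_of ⟨0, fun N => by positivity⟩
  obtain ⟨N₀', hN₀'⟩ := Filter.eventually_atTop.mp hWev
  set N₀ := max N₀' 1 with hN₀def
  have hN₀ : ∀ N ≥ N₀, ρ < ((mapW σ (List.ofFn fun i : Fin N => u i)).length : ℝ) / (N : ℝ) :=
    fun N hN => hN₀' N (le_trans (le_max_left _ _) hN)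
  have hg := spectrum.pow_norm_pow_one_div_tendsto_nhds_spectralRadius (incMat σ)
  have hlt : spectralRadius ℂ (incMat σ) < ENNReal.ofReal ρ' :=
    lt_of_le_of_lt hrad (by
      rw [← ENNReal.ofReal_one]
      exact (ENNReal.ofReal_lt_ofReal_iff hρ'0).mpr hρ'1)
  have hev := hg.eventually_lt_const hlt
  obtain ⟨n₁', hn₁'⟩ := Filter.eventually_atTop.mp hev
  set n₁ := max n₁' 1 with hn₁def
  have hnorm : ∀ n ≥ n₁, ‖(incMat σ) ^ n‖ ≤ ρ' ^ n := by
    intro n hn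
    have hn1 : 1 ≤ n := le_trans (le_max_right _ _) hn
    have h := hn₁' n (le_trans (le_max_left _ _) hn)
    rw [ENNReal.ofReal_lt_ofReal_iff hρ'0] at h
    have hx : (0:ℝ) ≤ ‖(incMat σ) ^ n‖ := norm_nonneg _
    have hne : (n : ℝ) ≠ 0 := Nat.cast_ne_zero.mpr (by omega)
    have heq : ‖(incMat σ) ^ n‖ = (‖(incMat σ) ^ n‖ ^ (1/(n:ℝ))) ^ n := by
      rw [← Real.rpow_natCast (‖(incMat σ) ^ n‖ ^ (1/(n:ℝ))) n, ← Real.rpow_mul hx,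
        one_div, inv_mul_cancel₀ hne, Real.rpow_one]
    rw [heq]
    exact pow_le_pow_left₀ (Real.rpow_nonneg hx _) h.le n
  set L : ℕ → ℕ := fun n => (iterW σ n [a]).length with hL
  obtain ⟨n₀, hn₀⟩ := Filter.eventually_atTop.mp (hpro.2.eventually_ge_atTop N₀)
  have hL1 : ∀ n ≥ n₀, 1 ≤ L n := fun n hn =>
    le_trans (le_trans (le_max_right _ _) (hn₀ n hn)) le_rfl
  have hstep : ∀ n, n₀ ≤ n → ρ * (L n : ℝ) ≤ (L (n+1) : ℝ) := by
    intro n hn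
    have h1 : N₀ ≤ L n := hn₀ n hn
    have h2 := hN₀ (L n) h1
    rw [aux_W_at_L σ a u hu n] at h2
    have hpos : (0:ℝ) < (L n : ℝ) := by exact_mod_cast hL1 n hn
    have := (lt_div_iff₀ hpos).mp h2
    linarith
  have hgrow : ∀ k : ℕ, ρ ^ k ≤ (L (n₀ + k) : ℝ) := by
    intro k
    induction k with
    | zero => simpa using (by exact_mod_cast hL1 n₀ le_rfl : (1:ℝ) ≤ (L n₀ : ℝ))
    | succ k ih =>
      have h1 := hstep (n₀ + k) (Nat.le_add_right _ _)
      calc ρ ^ (k+1) = ρ * ρ ^ k := by ring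
        _ ≤ ρ * (L (n₀ + k) : ℝ) := by nlinarith
        _ ≤ (L (n₀ + k + 1) : ℝ) := h1
  set C : ℝ := (Fintype.card A : ℝ) * ρ' ^ n₀ with hC
  have hbound : ∀ k : ℕ, n₀ + k ≥ n₁ → (ρ / ρ') ^ k ≤ C := by
    intro k hk
    have h1 := hgrow k
    have h2 := aux_len_le σ a (n₀ + k)
    have h3 := hnorm (n₀ + k) hk
    have h4 : ρ ^ k ≤ C * ρ' ^ k := by
      have : ρ ^ k ≤ (Fintype.card A : ℝ) * ρ' ^ (n₀ + k) := by
        calc ρ ^ k ≤ (L (n₀ + k) : ℝ) := h1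
          _ ≤ (Fintype.card A : ℝ) * ‖(incMat σ) ^ (n₀ + k)‖ := h2
          _ ≤ (Fintype.card A : ℝ) * ρ' ^ (n₀ + k) := by
              have : (0:ℝ) ≤ (Fintype.card A : ℝ) := Nat.cast_nonneg _
              nlinarith
      rw [pow_add] at this
      rw [hC]; linarith [this]
    rw [div_pow, div_le_iff₀ (pow_pos hρ'0 k)]
    linarith
  have hone : 1 < ρ / ρ' := (one_lt_div hρ'0).mpr hρ'ρ
  have htend := tendsto_pow_atTop_atTop_of_one_lt hone
  obtain ⟨k, hk1, hk2⟩ := ((htend.eventually_gt_atTop C).and (eventually_ge_atTop n₁)).exists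
  exact absurd (hbound k (by omega)) (not_le.mpr hk1)

end Stmt12Main
end

section
/- Let a be an infinite word output by a k-automaton with at most M states over output alphabet of size at most k. Then the factor complexity of a satisfies p(a, n) ≤ k M² n for all n ≥ 1. -/
/-- little-endian base-`k` digits of `s`, padded to length `m`. -/
def padLE (k m s : ℕ) : List ℕ := List.ofFn fun i : Fin m => s / k ^ (i : ℕ) % k

theorem digits_mul_pow_add {k : ℕ} (hk : 2 ≤ k) {c : ℕ} (hc : 1 ≤ c) :
    ∀ m s, s < k ^ m →
      Nat.digits k (c * k ^ m + s) = padLE k m s ++ Nat.digits k c := by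
  intro m
  induction m with
  | zero =>
    intro s hs
    have : s = 0 := by simpa using hs
    subst this
    simp [padLE]
  | succ m ih =>
    intro s hs
    have hk0 : 0 < k := by omega
    have hpos : 0 < c * k ^ (m + 1) + s := by
      have : 0 < c * k ^ (m + 1) := Nat.mul_pos hc (pow_pos hk0 _)
      omega
    rw [Nat.digits_def' (by omega : 1 < k) hpos]
    have h1 : c * k ^ (m + 1) + s = s + c * k ^ m * k := by ring
    rw [h1, Nat.add_mul_mod_self_right, Nat.add_mul_div_right _ _ hk0]
    have hdiv : s / k < k ^ m := by
      apply Nat.div_lt_of_lt_mul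
      rw [← pow_succ']
      exact hs
    rw [add_comm (s / k), ih (s / k) hdiv]
    have hpad : padLE k (m + 1) s = s % k :: padLE k m (s / k) := by
      simp only [padLE, List.ofFn_succ, pow_zero, Nat.div_one]
      congr 1
      · simp
      · apply congrArg List.ofFn
        funext i
        show s / k ^ ((i : ℕ) + 1) % k = s / k / k ^ (i : ℕ) % k
        rw [Nat.div_div_eq_div_mul, ← pow_succ']
    rw [hpad]
    simp

theorem arith_bound(k M n K : ℕ) (hk : 2 ≤ k) (hM : 2 ≤ M) (hn : 2 ≤ n)
    (h1 : n ≤ K) (h2 : K ≤ k * (n - 1)) :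
    (K - n + 1) * M + (n - 1) * (M * M) + (K - 1) ≤ k * M ^ 2 * n := by
  obtain ⟨p, hp, rfl⟩ : ∃ p, 1 ≤ p ∧ k = p + 1 := ⟨k - 1, by omega, by omega⟩
  obtain ⟨q, hq, rfl⟩ : ∃ q, 1 ≤ q ∧ n = q + 1 := ⟨n - 1, by omega, by omega⟩
  have h2' : K ≤ p * q + q := by
    have e : (p + 1) * ((q + 1) - 1) = p * q + q := by
      rw [Nat.add_sub_cancel]; ring
    omega
  have hMM : M + 2 ≤ M * M := by nlinarith
  have h4 : p * q * M + 2 * (p * q) ≤ p * q * (M * M) := by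
    have h := Nat.mul_le_mul_left (p * q) hMM
    nlinarith [h]
  have h5 : q ≤ p * q := Nat.le_mul_of_pos_left q (by omega)
  have h6 : 1 ≤ M * M := by nlinarith
  have eR : (p + 1) * M ^ 2 * (q + 1) = p * q * (M * M) + p * (M * M) + q * (M * M) + M * M := by
    ring
  have eL1 : K - (q + 1) + 1 ≤ p * q + q + 1 - (q + 1) + 1 := by omega
  have eL : (K - (q + 1) + 1) * M + ((q + 1) - 1) * (M * M) + (K - 1)
      ≤ (p * q) * M + q * (M * M) + (p * q + q) := by
    have e1 : K - (q + 1) + 1 ≤ p * q := by omega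
    have e2 : (q + 1) - 1 = q := by omega
    have e3 : K - 1 ≤ p * q + q := by omega
    rw [e2]
    exact Nat.add_le_add (Nat.add_le_add (Nat.mul_le_mul_right M e1) le_rfl) e3
  refine le_trans eL ?_
  rw [eR]
  linarith [h4, h5, h6, Nat.zero_le (p * (M * M))]

/-- the factor complexity of the output of a `k`-automaton with at
most `M` states (and output alphabet of size at most `k`) satisfies
`p(a, n) ≤ k M² n`. -/
theorem stmt_19 {Q Δ : Type*} [Fintype Q] [Fintype Δ] (k M : ℕ) (hk : 2 ≤ k)
    (hQ : Fintype.card Q ≤ M) (hΔ : Fintype.card Δ ≤ k)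
    (δ : Q → ℕ → Q) (q₀ : Q) (τ : Q → Δ) (a : ℕ → Δ)
    (ha : ∀ n : ℕ, 1 ≤ n →
      a n = τ (List.foldl δ q₀ ((Nat.digits k n).reverse))) :
    ∀ n : ℕ, 1 ≤ n →
      {w : List Δ | ∃ j : ℕ, 1 ≤ j ∧
        w = List.ofFn fun i : Fin n => a (j + i)}.ncard ≤ k * M ^ 2 * n := by
  classical
  intro n hn
  have hQ1 : 1 ≤ Fintype.card Q := @Fintype.card_pos _ _ ⟨q₀⟩
  have hM1 : 1 ≤ M := hQ1.trans hQ
  by_cases hsub : Fintype.card Q = 1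
  · -- subsingleton: constant sequence
    haveI : Subsingleton Q := Fintype.card_le_one_iff_subsingleton.mp (le_of_eq hsub)
    have hconst : ∀ t, 1 ≤ t → a t = τ q₀ := by
      intro t ht
      rw [ha t ht]
      exact congrArg τ (Subsingleton.elim _ _)
    have hXsub : {w : List Δ | ∃ j : ℕ, 1 ≤ j ∧
        w = List.ofFn fun i : Fin n => a (j + i)} ⊆ {List.ofFn fun _ : Fin n => τ q₀} := by
      rintro w ⟨j, hj, rfl⟩
      simp only [Set.mem_singleton_iff]
      apply congrArg List.ofFn
      funext i
      exact hconst (j + i) (by omega)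
    calc ({w : List Δ | ∃ j : ℕ, 1 ≤ j ∧
        w = List.ofFn fun i : Fin n => a (j + i)}).ncard
        ≤ ({List.ofFn fun _ : Fin n => τ q₀} : Set (List Δ)).ncard :=
          Set.ncard_le_ncard hXsub (Set.finite_singleton _)
      _ = 1 := Set.ncard_singleton _
      _ ≤ k * M ^ 2 * n :=
          Nat.one_le_iff_ne_zero.mpr
            (Nat.mul_ne_zero (Nat.mul_ne_zero (by omega) (pow_ne_zero _ (by omega))) (by omega))
  have hM2 : 2 ≤ M := le_trans (by omega) hQ
  by_cases hn1 : n = 1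
  · subst hn1
    have hXsub : {w : List Δ | ∃ j : ℕ, 1 ≤ j ∧
        w = List.ofFn fun i : Fin 1 => a (j + i)} ⊆
        ↑((Finset.univ : Finset Δ).image fun d => [d]) := by
      rintro w ⟨j, hj, rfl⟩
      simp only [Finset.coe_image, Set.mem_image, Finset.mem_coe, Finset.mem_univ]
      exact ⟨a (j + 0), ⟨trivial, by simp [List.ofFn_succ]⟩⟩
    calc ({w : List Δ | ∃ j : ℕ, 1 ≤ j ∧
        w = List.ofFn fun i : Fin 1 => a (j + i)}).ncard
        ≤ (↑((Finset.univ : Finset Δ).image fun d => [d]) : Set (List Δ)).ncard :=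
          Set.ncard_le_ncard hXsub (Finset.finite_toSet _)
      _ = ((Finset.univ : Finset Δ).image fun d => [d]).card := Set.ncard_coe_finset _
      _ ≤ Fintype.card Δ := (Finset.card_image_le).trans (le_of_eq (Finset.card_univ))
      _ ≤ k * M ^ 2 * 1 := by
          have h1 : k ≤ k * M ^ 2 := Nat.le_mul_of_pos_right k (by positivity)
          calc Fintype.card Δ ≤ k := hΔ
            _ ≤ k * M ^ 2 := h1
            _ = k * M ^ 2 * 1 := (mul_one _).symm
  have hn2 : 2 ≤ n := by omega
  -- choose the scale m
  set m := Nat.clog k n with hm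
  have hnK : n ≤ k ^ m := Nat.le_pow_clog (by omega) n
  have hKlt : k ^ (m - 1) < n := Nat.pow_pred_clog_lt_self (by omega) (by omega)
  have hm1 : 1 ≤ m := by
    rcases Nat.eq_zero_or_pos m with h | h
    · rw [h, pow_zero] at hnK
      omega
    · exact h
  have hKle : k ^ m ≤ k * (n - 1) := by
    have e : k ^ m = k * k ^ (m - 1) := by
      rw [← pow_succ']
      congr 1
      omega
    rw [e]
    exact Nat.mul_le_mul_left _ (by omega)
  set K := k ^ m with hK
  have hKpos : 0 < K := by positivity
  -- key block lemma
  have key : ∀ c s : ℕ, 1 ≤ c → s < K →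
      a (c * K + s) = τ (List.foldl δ (List.foldl δ q₀ (Nat.digits k c).reverse)
        ((padLE k m s).reverse)) := by
    intro c s hc hs
    have hpos : 1 ≤ c * K + s := by
      have : 0 < c * K := Nat.mul_pos hc hKpos
      omega
    rw [ha _ hpos, hK, digits_mul_pow_add hk hc m s (by rwa [← hK]),
      List.reverse_append, List.foldl_append]
  set St : ℕ → Q := fun c => List.foldl δ q₀ (Nat.digits k c).reverse with hSt
  set G : ℕ → Q → Q → List Δ := fun r q q' => List.ofFn fun i : Fin n =>
    if r + (i : ℕ) < K then τ (List.foldl δ q ((padLE k m (r + i)).reverse))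
    else τ (List.foldl δ q' ((padLE k m (r + i - K)).reverse)) with hG
  set H : ℕ → List Δ := fun j => List.ofFn fun i : Fin n => a (j + i) with hHdef
  set F₁ : Finset (List Δ) :=
    (Finset.range (K - n + 1) ×ˢ (Finset.univ : Finset Q)).image
      (fun p => G p.1 p.2 q₀) with hF1
  set F₂ : Finset (List Δ) :=
    ((Finset.Ico (K - n + 1) K) ×ˢ ((Finset.univ : Finset Q) ×ˢ (Finset.univ : Finset Q))).image
      (fun p => G p.1 p.2.1 p.2.2) with hF2
  set F₃ : Finset (List Δ) := (Finset.Ico 1 K).image H with hF3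
  have hsubX : {w : List Δ | ∃ j : ℕ, 1 ≤ j ∧
      w = List.ofFn fun i : Fin n => a (j + i)} ⊆ ↑(F₁ ∪ F₂ ∪ F₃) := by
    rintro w ⟨j, hj, rfl⟩
    by_cases hjK : j < K
    · refine Finset.mem_coe.mpr (Finset.mem_union_right _ ?_)
      exact Finset.mem_image.mpr ⟨j, Finset.mem_Ico.mpr ⟨hj, hjK⟩, rfl⟩
    · set c := j / K with hc
      set r := j % K with hr
      have hc1 : 1 ≤ c := (Nat.one_le_div_iff hKpos).mpr (le_of_not_gt hjK)
      have hrK : r < K := Nat.mod_lt _ hKpos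
      have hjcr : j = c * K + r := by
        rw [hc, hr, mul_comm]
        exact (Nat.div_add_mod j K).symm
      have hval : ∀ i : Fin n, a (j + (i : ℕ)) =
          if r + (i : ℕ) < K then τ (List.foldl δ (St c) ((padLE k m (r + i)).reverse))
          else τ (List.foldl δ (St (c + 1)) ((padLE k m (r + i - K)).reverse)) := by
        intro i
        by_cases hiK : r + (i : ℕ) < K
        · rw [if_pos hiK]
          have e : j + (i : ℕ) = c * K + (r + i) := by omega
          rw [e]
          exact key c (r + i) hc1 hiK
        · rw [if_neg hiK]
          have hin : (i : ℕ) < n := i.isLt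
          have h2K : r + (i : ℕ) - K < K := by omega
          have e : j + (i : ℕ) = (c + 1) * K + (r + (i : ℕ) - K) := by
            have e2 : (c + 1) * K = c * K + K := by ring
            omega
          rw [e]
          exact key (c + 1) _ (by omega) h2K
      by_cases hcross : r + n ≤ K
      · refine Finset.mem_coe.mpr (Finset.mem_union_left _ (Finset.mem_union_left _ ?_))
        refine Finset.mem_image.mpr ⟨(r, St c), ?_, ?_⟩
        · exact Finset.mem_product.mpr ⟨Finset.mem_range.mpr (by omega), Finset.mem_univ _⟩
        · show G r (St c) q₀ = _
          rw [hG]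
          apply congrArg List.ofFn
          funext i
          have hiK : r + (i : ℕ) < K := by have := i.isLt; omega
          simp only [if_pos hiK]
          rw [hval i, if_pos hiK]
      · refine Finset.mem_coe.mpr (Finset.mem_union_left _ (Finset.mem_union_right _ ?_))
        refine Finset.mem_image.mpr ⟨(r, St c, St (c + 1)), ?_, ?_⟩
        · exact Finset.mem_product.mpr ⟨Finset.mem_Ico.mpr ⟨by omega, hrK⟩,
            Finset.mem_product.mpr ⟨Finset.mem_univ _, Finset.mem_univ _⟩⟩
        · show G r (St c) (St (c + 1)) = _
          rw [hG]
          apply congrArg List.ofFn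
          funext i
          rw [hval i]
  -- cardinality bounds
  have hcard1 : F₁.card ≤ (K - n + 1) * M := by
    calc F₁.card ≤ (Finset.range (K - n + 1) ×ˢ (Finset.univ : Finset Q)).card :=
          Finset.card_image_le
      _ = (K - n + 1) * Fintype.card Q := by
          rw [Finset.card_product, Finset.card_range, Finset.card_univ]
      _ ≤ (K - n + 1) * M := Nat.mul_le_mul_left _ hQ
  have hcard2 : F₂.card ≤ (n - 1) * (M * M) := by
    calc F₂.card ≤ ((Finset.Ico (K - n + 1) K) ×ˢ
          ((Finset.univ : Finset Q) ×ˢ (Finset.univ : Finset Q))).card :=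
          Finset.card_image_le
      _ = (K - (K - n + 1)) * (Fintype.card Q * Fintype.card Q) := by
          rw [Finset.card_product, Finset.card_product, Nat.card_Ico, Finset.card_univ]
      _ = (n - 1) * (Fintype.card Q * Fintype.card Q) := by
          congr 1
          omega
      _ ≤ (n - 1) * (M * M) := Nat.mul_le_mul_left _ (Nat.mul_le_mul hQ hQ)
  have hcard3 : F₃.card ≤ K - 1 := by
    calc F₃.card ≤ (Finset.Ico 1 K).card := Finset.card_image_le
      _ = K - 1 := Nat.card_Ico _ _
  calc ({w : List Δ | ∃ j : ℕ, 1 ≤ j ∧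
      w = List.ofFn fun i : Fin n => a (j + i)}).ncard
      ≤ (↑(F₁ ∪ F₂ ∪ F₃) : Set (List Δ)).ncard :=
        Set.ncard_le_ncard hsubX (Finset.finite_toSet _)
    _ = (F₁ ∪ F₂ ∪ F₃).card := Set.ncard_coe_finset _
    _ ≤ F₁.card + F₂.card + F₃.card := by
        refine le_trans (Finset.card_union_le _ _) ?_
        exact Nat.add_le_add_right (Finset.card_union_le _ _) _
    _ ≤ (K - n + 1) * M + (n - 1) * (M * M) + (K - 1) :=
        Nat.add_le_add (Nat.add_le_add hcard1 hcard2) hcard3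
    _ ≤ k * M ^ 2 * n := arith_bound k M n K hk hM2 hn2 hnK hKle
end
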